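/- Let h^f_s(Ω) = inf{ Per_s(A)/∫_A f : A ⊂ Ω, ∫_A f > 0 } be the weighted fractional Cheegar constant, with f ≥ 0, f ∈ L^{n/σ}(Ω) for some σ ∈ (0,s), and suppose f > 0 on some ball B ⊂ Ω (i.e. ∫_B f > 0). If h^f_s(Ω) > 1, then the unique minimizer of F(u) = (1/2)[u]_{W^{s,1}(ℝⁿ)} − ∫_Ω fu over W^{s,1}_0(Ω) is u = 0. -/

import Mathlib

open MeasureTheory Set
open scoped ENNReal

noncomputable section

/-- The Gagliardo `W^{s,1}(ℝⁿ)` seminorm of `u`, as a double integral in `ℝ≥0∞`. -/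
def gag1 (n : ℕ) (s : ℝ) (u : EuclideanSpace ℝ (Fin n) → ℝ) : ℝ≥0∞ :=
  ∫⁻ x, ∫⁻ y, ENNReal.ofReal (|u x - u y| / dist x y ^ ((n : ℝ) + s))

/-- Admissible class `W^{s,1}_0(Ω)`: measurable functions vanishing outside `Ω` with finite
Gagliardo `W^{s,1}(ℝⁿ)` seminorm (and with `f·u` integrable on `Ω`, so that the energy is
well defined). -/
def Adm (n : ℕ) (s : ℝ) (Ω : Set (EuclideanSpace ℝ (Fin n)))
    (f u : EuclideanSpace ℝ (Fin n) → ℝ) : Prop :=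
  Measurable u ∧ (∀ x ∉ Ω, u x = 0) ∧ gag1 n s u ≠ ⊤ ∧
    IntegrableOn (fun x => f x * u x) Ω

/-- The energy `F(u) = (1/2)[u]_{W^{s,1}(ℝⁿ)} − ∫_Ω f u`. -/
def F1 (n : ℕ) (s : ℝ) (Ω : Set (EuclideanSpace ℝ (Fin n)))
    (f u : EuclideanSpace ℝ (Fin n) → ℝ) : ℝ :=
  (1 / 2) * (gag1 n s u).toReal - ∫ x in Ω, f x * u x

/-- The fractional `s`-perimeter of a set `A ⊆ ℝⁿ`. -/
def perS (n : ℕ) (s : ℝ) (A : Set (EuclideanSpace ℝ (Fin n))) : ℝ≥0∞ :=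
  (1 / 2) * gag1 n s (A.indicator fun _ => (1 : ℝ))

/-- The geometric functional `P(A) = Per_s(A) − ∫_A f`, valued in `EReal`. -/
def PE (n : ℕ) (s : ℝ) (f : EuclideanSpace ℝ (Fin n) → ℝ)
    (A : Set (EuclideanSpace ℝ (Fin n))) : EReal :=
  (perS n s A : EReal) - ((∫ x in A, f x : ℝ) : EReal)

/-- The weighted fractional `(s,f)`-Cheegar constant of `Ω`. -/
def cheeg (n : ℕ) (s : ℝ) (Ω : Set (EuclideanSpace ℝ (Fin n)))
    (f : EuclideanSpace ℝ (Fin n) → ℝ) : ℝ≥0∞ :=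
  sInf {r : ℝ≥0∞ | ∃ A : Set (EuclideanSpace ℝ (Fin n)), A ⊆ Ω ∧ MeasurableSet A ∧
    (0 < ∫ x in A, f x) ∧ r = perS n s A / ENNReal.ofReal (∫ x in A, f x)}

/-! ## Auxiliary lemmas -/

lemma gag1_zero (n : ℕ) (s : ℝ) : gag1 n s (fun _ => 0) = 0 := by
  simp [gag1]

lemma gag1_mono (n : ℕ) (s : ℝ) (u v : EuclideanSpace ℝ (Fin n) → ℝ)
    (h : ∀ x y, |u x - u y| ≤ |v x - v y|) : gag1 n s u ≤ gag1 n s v := by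
  refine lintegral_mono fun x => lintegral_mono fun y => ENNReal.ofReal_le_ofReal ?_
  rw [div_eq_mul_inv, div_eq_mul_inv]
  exact mul_le_mul_of_nonneg_right (h x y)
    (inv_nonneg.2 (Real.rpow_nonneg dist_nonneg _))

lemma ofReal_div' (a d : ℝ) (hd : 0 ≤ d) (h0 : d = 0 → a = 0) :
    ENNReal.ofReal (a / d) = ENNReal.ofReal a / ENNReal.ofReal d := by
  rcases hd.lt_or_eq with hlt | heq
  · exact ENNReal.ofReal_div_of_pos hlt
  · rw [← heq, h0 heq.symm]; simp

lemma layer_abs_le {a b : ℝ} (ha : 0 ≤ a) (hab : a ≤ b) :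
    ∫⁻ t in Ioi (0:ℝ),
      ENNReal.ofReal |(if t < a then (1:ℝ) else 0) - (if t < b then 1 else 0)|
      = ENNReal.ofReal (b - a) := by
  have hpt : ∀ t : ℝ,
      ENNReal.ofReal |(if t < a then (1:ℝ) else 0) - (if t < b then 1 else 0)|
      = (Ico a b).indicator (fun _ => (1:ℝ≥0∞)) t := by
    intro t
    by_cases h1 : t < a
    · have h2 : t < b := lt_of_lt_of_le h1 hab
      simp [h1, h2, indicator_apply, mem_Ico, not_le.2 h1]
    · by_cases h2 : t < b
      · simp [h1, h2, indicator_apply, mem_Ico, not_lt.1 h1]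
      · simp [h1, h2, indicator_apply, mem_Ico]
  rw [lintegral_congr hpt, lintegral_indicator measurableSet_Ico,
    setLIntegral_one, Measure.restrict_apply measurableSet_Ico]
  refine le_antisymm ?_ ?_
  · calc volume (Ico a b ∩ Ioi 0) ≤ volume (Ico a b) := measure_mono inter_subset_left
      _ = ENNReal.ofReal (b - a) := Real.volume_Ico
  · calc ENNReal.ofReal (b - a) = volume (Ioo a b) := Real.volume_Ioo.symm
      _ ≤ volume (Ico a b ∩ Ioi 0) := measure_mono fun t ht =>
          ⟨⟨le_of_lt ht.1, ht.2⟩, lt_of_le_of_lt ha ht.1⟩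

lemma layer_abs (a b : ℝ) (ha : 0 ≤ a) (hb : 0 ≤ b) :
    ∫⁻ t in Ioi (0:ℝ),
      ENNReal.ofReal |(if t < a then (1:ℝ) else 0) - (if t < b then 1 else 0)|
      = ENNReal.ofReal |a - b| := by
  rcases le_total a b with h | h
  · rw [abs_sub_comm, abs_of_nonneg (sub_nonneg.2 h)]
    exact layer_abs_le ha h
  · rw [abs_of_nonneg (sub_nonneg.2 h)]
    rw [show (∫⁻ t in Ioi (0:ℝ),
      ENNReal.ofReal |(if t < a then (1:ℝ) else 0) - (if t < b then 1 else 0)|)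
      = ∫⁻ t in Ioi (0:ℝ),
      ENNReal.ofReal |(if t < b then (1:ℝ) else 0) - (if t < a then 1 else 0)| from
      lintegral_congr fun t => by rw [abs_sub_comm]]
    exact layer_abs_le hb h

section
variable {n : ℕ} {s : ℝ}

lemma rpow_dist_meas (hs : 0 < s) {α : Type*} [TopologicalSpace α] [MeasurableSpace α]
    [OpensMeasurableSpace α]
    (g h : α → EuclideanSpace ℝ (Fin n)) (hg : Continuous g) (hh : Continuous h) :
    Measurable fun a => dist (g a) (h a) ^ ((n:ℝ) + s) := by
  have hp : (0:ℝ) ≤ (n:ℝ) + s := by positivity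
  exact ((Real.continuous_rpow_const hp).comp (hg.dist hh)).measurable

/-- joint measurability of the Gagliardo integrand of the superlevel indicators -/
lemma measG (hs : 0 < s) (u : EuclideanSpace ℝ (Fin n) → ℝ) (hu : Measurable u) :
    Measurable fun q : (EuclideanSpace ℝ (Fin n) × EuclideanSpace ℝ (Fin n)) × ℝ =>
      ENNReal.ofReal
        (|Set.indicator {x | q.2 < u x} (fun _ => (1:ℝ)) q.1.1
          - Set.indicator {x | q.2 < u x} (fun _ => (1:ℝ)) q.1.2|
          / dist q.1.1 q.1.2 ^ ((n:ℝ) + s)) := by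
  have hind : ∀ (g : (EuclideanSpace ℝ (Fin n) × EuclideanSpace ℝ (Fin n)) × ℝ →
        EuclideanSpace ℝ (Fin n)), Measurable g →
      Measurable fun q => Set.indicator {x | q.2 < u x} (fun _ => (1:ℝ)) (g q) := by
    intro g hg
    have : (fun q : (EuclideanSpace ℝ (Fin n) × EuclideanSpace ℝ (Fin n)) × ℝ =>
        Set.indicator {x | q.2 < u x} (fun _ => (1:ℝ)) (g q))
        = Set.indicator {q : (EuclideanSpace ℝ (Fin n) × EuclideanSpace ℝ (Fin n)) × ℝ |
            q.2 < u (g q)} (fun _ => (1:ℝ)) := by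
      funext q; simp [indicator_apply]
    rw [this]
    exact Measurable.indicator measurable_const
      (measurableSet_lt measurable_snd (hu.comp hg))
  have h1 := hind _ (measurable_fst.fst)
  have h2 := hind _ (measurable_fst.snd)
  have hd : Measurable fun q : (EuclideanSpace ℝ (Fin n) × EuclideanSpace ℝ (Fin n)) × ℝ =>
      dist q.1.1 q.1.2 ^ ((n:ℝ) + s) :=
    rpow_dist_meas hs _ _ (continuous_fst.fst) (continuous_fst.snd)
  exact (((h1.sub h2).abs.div hd)).ennreal_ofReal

/-- Coarea formula for the Gagliardo seminorm of a nonnegative function. -/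
lemma coarea (hs : 0 < s) (u : EuclideanSpace ℝ (Fin n) → ℝ)
    (hu : Measurable u) (hu0 : ∀ x, 0 ≤ u x) :
    gag1 n s u
      = ∫⁻ t in Ioi (0:ℝ), gag1 n s (Set.indicator {x | t < u x} fun _ => (1:ℝ)) := by
  set p := (n:ℝ) + s with hpdef
  have hp : 0 ≤ p := by positivity
  set G : (EuclideanSpace ℝ (Fin n) × EuclideanSpace ℝ (Fin n)) × ℝ → ℝ≥0∞ :=
    fun q => ENNReal.ofReal
        (|Set.indicator {x | q.2 < u x} (fun _ => (1:ℝ)) q.1.1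
          - Set.indicator {x | q.2 < u x} (fun _ => (1:ℝ)) q.1.2|
          / dist q.1.1 q.1.2 ^ p) with hGdef
  have hG : Measurable G := measG hs u hu
  -- pointwise coarea
  have hpt : ∀ x y, ENNReal.ofReal (|u x - u y| / dist x y ^ p)
      = ∫⁻ t in Ioi (0:ℝ), G ((x, y), t) := by
    intro x y
    set d : ℝ := dist x y ^ p with hddef
    have hd0 : 0 ≤ d := Real.rpow_nonneg dist_nonneg _
    have hxy : d = 0 → x = y := by
      intro h
      by_contra hne
      have : 0 < d := Real.rpow_pos_of_pos (dist_pos.2 hne) _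
      exact absurd h (ne_of_gt this)
    have key : ∀ t : ℝ, G ((x, y), t)
        = ENNReal.ofReal |(if t < u x then (1:ℝ) else 0) - (if t < u y then 1 else 0)|
            * (ENNReal.ofReal d)⁻¹ := by
      intro t
      have h0 : d = 0 → |Set.indicator {x' | t < u x'} (fun _ => (1:ℝ)) x
          - Set.indicator {x' | t < u x'} (fun _ => (1:ℝ)) y| = 0 := by
        intro h; rw [hxy h]; simp
      rw [hGdef]
      simp only
      rw [ofReal_div' _ d hd0 h0, div_eq_mul_inv]
      congr 2 <;> simp [indicator_apply]
    calc ENNReal.ofReal (|u x - u y| / d)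
        = ENNReal.ofReal |u x - u y| * (ENNReal.ofReal d)⁻¹ := by
          rw [ofReal_div' _ d hd0 (fun h => by rw [hxy h]; simp), div_eq_mul_inv]
      _ = (∫⁻ t in Ioi (0:ℝ),
            ENNReal.ofReal |(if t < u x then (1:ℝ) else 0) - (if t < u y then 1 else 0)|)
            * (ENNReal.ofReal d)⁻¹ := by
          rw [layer_abs (u x) (u y) (hu0 x) (hu0 y)]
      _ = ∫⁻ t in Ioi (0:ℝ),
            ENNReal.ofReal |(if t < u x then (1:ℝ) else 0) - (if t < u y then 1 else 0)|
            * (ENNReal.ofReal d)⁻¹ := by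
          rw [lintegral_mul_const]
          have : Measurable fun t : ℝ => (if t < u x then (1:ℝ) else 0)
              - (if t < u y then 1 else 0) := by
            have e1 : Measurable fun t : ℝ => (if t < u x then (1:ℝ) else 0) := by
              have : (fun t : ℝ => (if t < u x then (1:ℝ) else 0))
                  = (Iio (u x)).indicator (fun _ => 1) := by
                funext t; simp [indicator_apply, mem_Iio]
              rw [this]; exact Measurable.indicator measurable_const measurableSet_Iio
            have e2 : Measurable fun t : ℝ => (if t < u y then (1:ℝ) else 0) := by
              have : (fun t : ℝ => (if t < u y then (1:ℝ) else 0))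
                  = (Iio (u y)).indicator (fun _ => 1) := by
                funext t; simp [indicator_apply, mem_Iio]
              rw [this]; exact Measurable.indicator measurable_const measurableSet_Iio
            exact e1.sub e2
          exact this.abs.ennreal_ofReal
      _ = ∫⁻ t in Ioi (0:ℝ), G ((x, y), t) := by
          exact (lintegral_congr fun t => (key t)).symm
  -- now swap integrals
  have swap1 : ∀ x, ∫⁻ y, ∫⁻ t in Ioi (0:ℝ), G ((x, y), t)
      = ∫⁻ t in Ioi (0:ℝ), ∫⁻ y, G ((x, y), t) := by
    intro x
    refine lintegral_lintegral_swap ?_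
    exact ((hG.comp ((measurable_const.prodMk measurable_fst).prodMk
      measurable_snd))).aemeasurable
  have swap2 : ∫⁻ x, ∫⁻ t in Ioi (0:ℝ), ∫⁻ y, G ((x, y), t)
      = ∫⁻ t in Ioi (0:ℝ), ∫⁻ x, ∫⁻ y, G ((x, y), t) := by
    refine lintegral_lintegral_swap ?_
    have : Measurable fun q : EuclideanSpace ℝ (Fin n) × ℝ =>
        ∫⁻ y, G ((q.1, y), q.2) := by
      refine Measurable.lintegral_prod_right' (f := fun q : (EuclideanSpace ℝ (Fin n) × ℝ)
        × EuclideanSpace ℝ (Fin n) => G ((q.1.1, q.2), q.1.2)) ?_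
      exact hG.comp (((measurable_fst.fst.prodMk measurable_snd)).prodMk
        measurable_fst.snd)
    exact this.aemeasurable
  calc gag1 n s u = ∫⁻ x, ∫⁻ y, ∫⁻ t in Ioi (0:ℝ), G ((x, y), t) := by
        refine lintegral_congr fun x => lintegral_congr fun y => ?_
        exact hpt x y
    _ = ∫⁻ x, ∫⁻ t in Ioi (0:ℝ), ∫⁻ y, G ((x, y), t) := lintegral_congr swap1
    _ = ∫⁻ t in Ioi (0:ℝ), ∫⁻ x, ∫⁻ y, G ((x, y), t) := swap2
    _ = ∫⁻ t in Ioi (0:ℝ), gag1 n s (Set.indicator {x | t < u x} fun _ => (1:ℝ)) := rfl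

end

section layercake
variable {α : Type*} [MeasurableSpace α]

lemma ofReal_pt (w : ℝ) :
    ENNReal.ofReal w = ∫⁻ t in Ioi (0:ℝ), (Iio w).indicator (fun _ => (1:ℝ≥0∞)) t := by
  rw [lintegral_indicator measurableSet_Iio, setLIntegral_one,
    Measure.restrict_apply measurableSet_Iio]
  have : Iio w ∩ Ioi 0 = Ioo 0 w := by
    ext t; simp [mem_Ioo, and_comm]
  rw [this, Real.volume_Ioo, sub_zero]

/-- layer-cake for the weighted integral -/
lemma layerI (μ : Measure α) [SFinite μ] (w f : α → ℝ) (hw : Measurable w)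
    (hf : AEMeasurable f μ) :
    ∫⁻ x, ENNReal.ofReal (f x) * ENNReal.ofReal (w x) ∂μ
      = ∫⁻ t in Ioi (0:ℝ), ∫⁻ x, ENNReal.ofReal (f x)
          * Set.indicator {x' | t < w x'} (fun _ => (1:ℝ≥0∞)) x ∂μ := by
  have step1 : ∀ x, ENNReal.ofReal (f x) * ENNReal.ofReal (w x)
      = ∫⁻ t in Ioi (0:ℝ), ENNReal.ofReal (f x)
          * Set.indicator {x' | t < w x'} (fun _ => (1:ℝ≥0∞)) x := by
    intro x
    rw [lintegral_const_mul' _ _ ENNReal.ofReal_ne_top]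
    congr 1
    rw [ofReal_pt (w x)]
    refine lintegral_congr fun t => ?_
    simp [indicator_apply, mem_Iio]
  rw [lintegral_congr step1]
  refine lintegral_lintegral_swap ?_
  have h1 : AEMeasurable (fun q : α × ℝ => ENNReal.ofReal (f q.1))
      (μ.prod (volume.restrict (Ioi 0))) := (hf.ennreal_ofReal).comp_fst
  have h2 : Measurable fun q : α × ℝ =>
      Set.indicator {x' | q.2 < w x'} (fun _ => (1:ℝ≥0∞)) q.1 := by
    have : (fun q : α × ℝ => Set.indicator {x' | q.2 < w x'} (fun _ => (1:ℝ≥0∞)) q.1)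
        = Set.indicator {q : α × ℝ | q.2 < w q.1} (fun _ => (1:ℝ≥0∞)) := by
      funext q; simp [indicator_apply]
    rw [this]
    exact Measurable.indicator measurable_const
      (measurableSet_lt measurable_snd (hw.comp measurable_fst))
  exact h1.mul h2.aemeasurable

end layercake

lemma ofReal_max_zero (a : ℝ) : ENNReal.ofReal (max a 0) = ENNReal.ofReal a := by
  rcases le_total a 0 with h | h
  · rw [max_eq_right h, ENNReal.ofReal_zero, eq_comm, ENNReal.ofReal_eq_zero]; exact h
  · rw [max_eq_left h]

/-- The main bound: for admissible `v`,
`cheeg · ∫⁻ f⁺v⁺ ≤ (1/2) gag1 v`, together with comparison of the real integral. -/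
lemma main_bound (n : ℕ) (s : ℝ) (Ω : Set (EuclideanSpace ℝ (Fin n)))
    (f : EuclideanSpace ℝ (Fin n) → ℝ) (hΩm : MeasurableSet Ω) (hs0 : 0 < s)
    (hf0 : ∀ x ∈ Ω, 0 ≤ f x) (hfi : IntegrableOn f Ω)
    (v : EuclideanSpace ℝ (Fin n) → ℝ) (hv : Adm n s Ω f v) :
    cheeg n s Ω f * (∫⁻ x in Ω, ENNReal.ofReal (f x) * ENNReal.ofReal (v x))
        ≤ (1/2 : ℝ≥0∞) * gag1 n s v ∧
      (∫ x in Ω, f x * v x)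
        ≤ (∫⁻ x in Ω, ENNReal.ofReal (f x) * ENNReal.ofReal (v x)).toReal ∧
      (∫⁻ x in Ω, ENNReal.ofReal (f x) * ENNReal.ofReal (v x)) ≠ ⊤ := by
  obtain ⟨hvm, hv0, hvg, hvint⟩ := hv
  set w : EuclideanSpace ℝ (Fin n) → ℝ := fun x => max (v x) 0 with hwdef
  have hw : Measurable w := hvm.max measurable_const
  have hw0 : ∀ x, 0 ≤ w x := fun x => le_max_right _ _
  have hofw : ∀ x, ENNReal.ofReal (w x) = ENNReal.ofReal (v x) := fun x =>
    ofReal_max_zero (v x)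
  have hfae : AEMeasurable f (volume.restrict Ω) := hfi.aemeasurable
  set I : ℝ≥0∞ := ∫⁻ x in Ω, ENNReal.ofReal (f x) * ENNReal.ofReal (v x) with hIdef
  -- I as a layered integral
  have hlayer : I = ∫⁻ t in Ioi (0:ℝ), ∫⁻ x in Ω, ENNReal.ofReal (f x)
      * Set.indicator {x' | t < w x'} (fun _ => (1:ℝ≥0∞)) x := by
    rw [hIdef, show (fun x => ENNReal.ofReal (f x) * ENNReal.ofReal (v x))
      = fun x => ENNReal.ofReal (f x) * ENNReal.ofReal (w x) from
      funext fun x => by rw [hofw]]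
    exact layerI _ w f hw hfae
  -- per-level bound
  have hlevel : ∀ t : ℝ, 0 < t →
      cheeg n s Ω f * (∫⁻ x in Ω, ENNReal.ofReal (f x)
        * Set.indicator {x' | t < w x'} (fun _ => (1:ℝ≥0∞)) x)
      ≤ perS n s {x | t < w x} := by
    intro t ht
    set A : Set (EuclideanSpace ℝ (Fin n)) := {x | t < w x} with hAdef
    have hsub : A ⊆ Ω := by
      intro x hx
      by_contra hxn
      have : w x = 0 := by rw [hwdef]; simp [hv0 x hxn]
      rw [hAdef] at hx
      simp only [mem_setOf_eq, this] at hx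
      exact absurd hx (not_lt.2 ht.le)
    have hAm : MeasurableSet A := measurableSet_lt measurable_const hw
    have eq1 : (∫⁻ x in Ω, ENNReal.ofReal (f x)
        * Set.indicator {x' | t < w x'} (fun _ => (1:ℝ≥0∞)) x)
        = ∫⁻ x in A, ENNReal.ofReal (f x) := by
      have : ∀ x, ENNReal.ofReal (f x)
          * Set.indicator {x' | t < w x'} (fun _ => (1:ℝ≥0∞)) x
          = A.indicator (fun x => ENNReal.ofReal (f x)) x := by
        intro x
        by_cases hx : x ∈ A
        · simp [indicator_apply, hAdef ▸ hx, hx]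
        · simp [indicator_apply, hx, hAdef ▸ hx]
      rw [lintegral_congr this, lintegral_indicator hAm,
        Measure.restrict_restrict hAm, inter_eq_left.2 hsub]
    have eq2 : ENNReal.ofReal (∫ x in A, f x) = ∫⁻ x in A, ENNReal.ofReal (f x) :=
      ofReal_integral_eq_lintegral_ofReal (hfi.mono_set hsub)
        (ae_restrict_of_forall_mem hAm fun x hx => hf0 x (hsub hx))
    rw [eq1, ← eq2]
    rcases le_or_gt (∫ x in A, f x) 0 with hle | hpos
    · rw [ENNReal.ofReal_eq_zero.2 hle, mul_zero]
      exact zero_le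
    · have hmem : perS n s A / ENNReal.ofReal (∫ x in A, f x) ∈
          {r : ℝ≥0∞ | ∃ B : Set (EuclideanSpace ℝ (Fin n)), B ⊆ Ω ∧ MeasurableSet B ∧
            (0 < ∫ x in B, f x) ∧ r = perS n s B / ENNReal.ofReal (∫ x in B, f x)} :=
        ⟨A, hsub, hAm, hpos, rfl⟩
      calc cheeg n s Ω f * ENNReal.ofReal (∫ x in A, f x)
          ≤ (perS n s A / ENNReal.ofReal (∫ x in A, f x))
              * ENNReal.ofReal (∫ x in A, f x) :=
            mul_le_mul_left (sInf_le hmem) _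
        _ = perS n s A := ENNReal.div_mul_cancel
            (ENNReal.ofReal_pos.2 hpos).ne' ENNReal.ofReal_ne_top
  -- first claim
  have claim1 : cheeg n s Ω f * I ≤ (1/2 : ℝ≥0∞) * gag1 n s v := by
    calc cheeg n s Ω f * I
        ≤ ∫⁻ t in Ioi (0:ℝ), cheeg n s Ω f * (∫⁻ x in Ω, ENNReal.ofReal (f x)
            * Set.indicator {x' | t < w x'} (fun _ => (1:ℝ≥0∞)) x) := by
          rw [hlayer]
          exact lintegral_const_mul_le _ _
      _ ≤ ∫⁻ t in Ioi (0:ℝ), perS n s {x | t < w x} := by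
          refine lintegral_mono_ae ?_
          filter_upwards [self_mem_ae_restrict measurableSet_Ioi] with t ht
          exact hlevel t ht
      _ = (1/2 : ℝ≥0∞) * ∫⁻ t in Ioi (0:ℝ),
            gag1 n s (Set.indicator {x | t < w x} fun _ => (1:ℝ)) := by
          rw [← lintegral_const_mul' _ _ (by norm_num : (1/2 : ℝ≥0∞) ≠ ⊤)]
          rfl
      _ = (1/2 : ℝ≥0∞) * gag1 n s w := by rw [← coarea hs0 w hw hw0]
      _ ≤ (1/2 : ℝ≥0∞) * gag1 n s v := by
          refine mul_le_mul_right (gag1_mono n s w v fun x y => ?_) _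
          exact abs_max_sub_max_le_abs (v x) (v y) 0
  -- second / third claims
  have hbound : ∀ x, ENNReal.ofReal (f x) * ENNReal.ofReal (v x)
      ≤ (‖f x * v x‖₊ : ℝ≥0∞) := by
    intro x
    calc ENNReal.ofReal (f x) * ENNReal.ofReal (v x)
        ≤ ENNReal.ofReal |f x| * ENNReal.ofReal |v x| :=
          mul_le_mul' (ENNReal.ofReal_le_ofReal (le_abs_self _))
            (ENNReal.ofReal_le_ofReal (le_abs_self _))
      _ = ENNReal.ofReal (|f x| * |v x|) := (ENNReal.ofReal_mul (abs_nonneg _)).symm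
      _ = ENNReal.ofReal |f x * v x| := by rw [abs_mul]
      _ = (‖f x * v x‖₊ : ℝ≥0∞) := by
          rw [← Real.norm_eq_abs, ofReal_norm, enorm_eq_nnnorm]
  have hItop : I ≠ ⊤ := by
    refine ne_of_lt (lt_of_le_of_lt (lintegral_mono hbound) ?_)
    exact hvint.2
  refine ⟨claim1, ?_, hItop⟩
  -- the real-integral comparison
  have hfw_meas : AEStronglyMeasurable (fun x => f x * w x) (volume.restrict Ω) :=
    hfi.aestronglyMeasurable.mul hw.aestronglyMeasurable
  have hfw_int : IntegrableOn (fun x => f x * w x) Ω := by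
    refine Integrable.mono hvint hfw_meas ?_
    refine Filter.Eventually.of_forall fun x => ?_
    rw [Real.norm_eq_abs, Real.norm_eq_abs, abs_mul, abs_mul]
    refine mul_le_mul_of_nonneg_left ?_ (abs_nonneg _)
    rw [abs_of_nonneg (hw0 x)]
    exact max_le (le_abs_self _) (abs_nonneg _)
  have hfnn : ∀ᵐ x ∂(volume.restrict Ω), 0 ≤ f x :=
    ae_restrict_of_forall_mem hΩm hf0
  have step1 : (∫ x in Ω, f x * v x) ≤ ∫ x in Ω, f x * w x := by
    refine integral_mono_ae hvint hfw_int ?_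
    filter_upwards [hfnn] with x hx
    exact mul_le_mul_of_nonneg_left (le_max_left _ _) hx
  have step2 : (∫ x in Ω, f x * w x) = I.toReal := by
    rw [integral_eq_lintegral_of_nonneg_ae
      (by filter_upwards [hfnn] with x hx; exact mul_nonneg hx (hw0 x)) hfw_meas]
    congr 1
    refine lintegral_congr_ae ?_
    filter_upwards [hfnn] with x hx
    rw [ENNReal.ofReal_mul hx, hofw]
  linarith [step1, step2.le, step2.ge]

end

lemma half_toReal : ((1/2 : ℝ≥0∞)).toReal = (1/2 : ℝ) := by
  rw [ENNReal.toReal_div]; norm_num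

/-- If the weighted fractional Cheegar constant satisfies `h^f_s(Ω) > 1` (with `f ≥ 0`,
`f ∈ L^{n/σ}(Ω)` for some `σ ∈ (0,s)`, and `∫_B f > 0` on some ball `B ⊆ Ω`), then the
unique minimizer of `F(u) = (1/2)[u]_{W^{s,1}(ℝⁿ)} − ∫_Ω f u` over `W^{s,1}_0(Ω)` is
`u = 0`. -/
theorem stmt9 (n : ℕ) (s σ : ℝ) (Ω : Set (EuclideanSpace ℝ (Fin n)))
    (f : EuclideanSpace ℝ (Fin n) → ℝ)
    (hΩo : IsOpen Ω) (hΩb : Bornology.IsBounded Ω)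
    (hs0 : 0 < s) (hs1 : s < 1) (hσ0 : 0 < σ) (hσs : σ < s)
    (hf0 : ∀ x ∈ Ω, 0 ≤ f x)
    (hf : MemLp f (ENNReal.ofReal ((n : ℝ) / σ)) (volume.restrict Ω))
    (x₀ : EuclideanSpace ℝ (Fin n)) (r₀ : ℝ) (hr₀ : 0 < r₀)
    (hball : Metric.ball x₀ r₀ ⊆ Ω) (hfball : 0 < ∫ x in Metric.ball x₀ r₀, f x)
    (hcheeg : 1 < cheeg n s Ω f) :
    (Adm n s Ω f (fun _ => (0 : ℝ)) ∧
      ∀ v, Adm n s Ω f v → F1 n s Ω f (fun _ => (0 : ℝ)) ≤ F1 n s Ω f v) ∧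
    ∀ u, Adm n s Ω f u → (∀ v, Adm n s Ω f v → F1 n s Ω f u ≤ F1 n s Ω f v) →
      u =ᵐ[volume] fun _ => (0 : ℝ) := by
  have hΩm : MeasurableSet Ω := hΩo.measurableSet
  rcases Nat.eq_zero_or_pos n with hn0 | hn
  · -- the degenerate case `n = 0` contradicts `1 < cheeg`
    exfalso
    subst hn0
    haveI : Subsingleton (EuclideanSpace ℝ (Fin 0)) :=
      ⟨fun a b => by ext i; exact i.elim0⟩
    have hg0 : ∀ u : EuclideanSpace ℝ (Fin 0) → ℝ, gag1 0 s u = 0 := by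
      intro u
      unfold gag1
      refine (lintegral_congr fun x => ?_).trans lintegral_zero
      refine (lintegral_congr fun y => ?_).trans lintegral_zero
      rw [Subsingleton.elim y x]; simp
    have hz : perS 0 s (Metric.ball x₀ r₀)
        / ENNReal.ofReal (∫ x in Metric.ball x₀ r₀, f x) = 0 := by
      unfold perS; rw [hg0]; simp
    have hle : cheeg 0 s Ω f ≤ perS 0 s (Metric.ball x₀ r₀)
        / ENNReal.ofReal (∫ x in Metric.ball x₀ r₀, f x) := by
      unfold cheeg
      exact sInf_le ⟨Metric.ball x₀ r₀, hball, measurableSet_ball, hfball, rfl⟩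
    rw [hz] at hle
    exact absurd (lt_of_lt_of_le hcheeg hle) (by simp)
  -- main case `1 ≤ n`
  haveI : Nonempty (Fin n) := ⟨⟨0, hn⟩⟩
  have hvolΩ : volume Ω < ⊤ := hΩb.measure_lt_top
  haveI : IsFiniteMeasure (volume.restrict Ω) :=
    ⟨by rwa [Measure.restrict_apply_univ]⟩
  have h1p : (1:ℝ≥0∞) ≤ ENNReal.ofReal ((n:ℝ)/σ) := by
    rw [ENNReal.one_le_ofReal, le_div_iff₀ hσ0, one_mul]
    have h1n : (1:ℝ) ≤ (n:ℝ) := by exact_mod_cast hn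
    linarith
  have hfi : IntegrableOn f Ω := hf.integrable h1p
  have hzero_adm : Adm n s Ω f (fun _ => 0) :=
    ⟨measurable_const, fun _ _ => rfl, by rw [gag1_zero]; exact ENNReal.zero_ne_top,
      by simp only [mul_zero]; exact integrable_zero _ _ _⟩
  have hF0 : F1 n s Ω f (fun _ => 0) = 0 := by
    unfold F1; rw [gag1_zero]; simp
  have key : ∀ v, Adm n s Ω f v → 0 ≤ F1 n s Ω f v := by
    intro v hv
    obtain ⟨c1, c2, c3⟩ := main_bound n s Ω f hΩm hs0 hf0 hfi v hv
    set I : ℝ≥0∞ := ∫⁻ x in Ω, ENNReal.ofReal (f x) * ENNReal.ofReal (v x) with hI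
    have h1 : I ≤ cheeg n s Ω f * I := by
      conv_lhs => rw [← one_mul I]
      exact mul_le_mul_left hcheeg.le I
    have htop : (1/2 : ℝ≥0∞) * gag1 n s v ≠ ⊤ :=
      ENNReal.mul_ne_top (by norm_num) hv.2.2.1
    have e1 : I.toReal ≤ ((1/2 : ℝ≥0∞) * gag1 n s v).toReal :=
      ENNReal.toReal_mono htop (h1.trans c1)
    have e2 : ((1/2 : ℝ≥0∞) * gag1 n s v).toReal = (1/2) * (gag1 n s v).toReal := by
      rw [ENNReal.toReal_mul, half_toReal]
    unfold F1
    linarith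
  refine ⟨⟨hzero_adm, fun v hv => by rw [hF0]; exact key v hv⟩, ?_⟩
  intro u hu hmin
  have hle : F1 n s Ω f u ≤ 0 := by
    have := hmin _ hzero_adm
    rwa [hF0] at this
  obtain ⟨c1, c2, c3⟩ := main_bound n s Ω f hΩm hs0 hf0 hfi u hu
  set I : ℝ≥0∞ := ∫⁻ x in Ω, ENNReal.ofReal (f x) * ENNReal.ofReal (u x) with hI
  have htop : (1/2 : ℝ≥0∞) * gag1 n s u ≠ ⊤ :=
    ENNReal.mul_ne_top (by norm_num) hu.2.2.1
  have e2 : ((1/2 : ℝ≥0∞) * gag1 n s u).toReal = (1/2) * (gag1 n s u).toReal := by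
    rw [ENNReal.toReal_mul, half_toReal]
  have hIzero : I = 0 := by
    by_contra hI0
    have hlt : I < cheeg n s Ω f * I := by
      conv_lhs => rw [← one_mul I]
      exact ENNReal.mul_lt_mul_left hI0 c3 hcheeg
    have h2 : (cheeg n s Ω f * I).toReal ≤ ((1/2 : ℝ≥0∞) * gag1 n s u).toReal :=
      ENNReal.toReal_mono htop c1
    have h3 : I.toReal < (cheeg n s Ω f * I).toReal :=
      (ENNReal.toReal_lt_toReal c3 (ne_top_of_le_ne_top htop c1)).2 hlt
    unfold F1 at hle
    linarith
  have hgag : gag1 n s u = 0 := by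
    have h2 : (∫ x in Ω, f x * u x) ≤ 0 := by
      rw [hIzero] at c2; simpa using c2
    unfold F1 at hle
    have h3 : (gag1 n s u).toReal = 0 := by
      have h4 := ENNReal.toReal_nonneg (a := gag1 n s u)
      linarith
    rcases (ENNReal.toReal_eq_zero_iff _).1 h3 with h | h
    · exact h
    · exact absurd h hu.2.2.1
  -- conclude `u = 0` a.e.
  haveI : NullSingletonClass (volume : Measure (EuclideanSpace ℝ (Fin n))) := inferInstance
  have hG2 : Measurable fun q : EuclideanSpace ℝ (Fin n) × EuclideanSpace ℝ (Fin n) =>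
      ENNReal.ofReal (|u q.1 - u q.2| / dist q.1 q.2 ^ ((n:ℝ) + s)) := by
    have hd := rpow_dist_meas (n := n) hs0 Prod.fst Prod.snd continuous_fst continuous_snd
    exact (((hu.1.comp measurable_fst).sub (hu.1.comp measurable_snd)).abs.div
      hd).ennreal_ofReal
  have h1 : ∀ᵐ x : EuclideanSpace ℝ (Fin n),
      (∫⁻ y, ENNReal.ofReal (|u x - u y| / dist x y ^ ((n:ℝ) + s))) = 0 := by
    have := (lintegral_eq_zero_iff (hG2.lintegral_prod_right')).1 hgag
    filter_upwards [this] with x hx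
    exact hx
  have h2 : ∀ᵐ x : EuclideanSpace ℝ (Fin n), u =ᵐ[volume] fun _ => u x := by
    filter_upwards [h1] with x hx
    have hy := (lintegral_eq_zero_iff (hG2.comp (measurable_prodMk_left))).1 hx
    have hne : ∀ᵐ y : EuclideanSpace ℝ (Fin n), y ≠ x := by
      rw [ae_iff]
      simpa [not_not, Set.setOf_eq_eq_singleton] using
        (measure_singleton x : volume {x} = 0)
    filter_upwards [hy, hne] with y hy1 hy2
    have hd : 0 < dist x y ^ ((n:ℝ) + s) :=
      Real.rpow_pos_of_pos (dist_pos.2 (Ne.symm hy2)) _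
    have hq : |u x - u y| / dist x y ^ ((n:ℝ) + s) ≤ 0 := by
      have : ENNReal.ofReal (|u x - u y| / dist x y ^ ((n:ℝ) + s)) = 0 := hy1
      exact ENNReal.ofReal_eq_zero.1 this
    have habs : |u x - u y| ≤ 0 := by
      have := (div_le_iff₀ hd).1 hq
      simpa using this
    have : u x - u y = 0 :=
      abs_eq_zero.1 (le_antisymm habs (abs_nonneg _))
    have : u x = u y := by linarith [abs_nonneg (u x - u y), sub_eq_zero.1 this]
    exact this.symm
  have hvol0 : (volume : Measure (EuclideanSpace ℝ (Fin n))) ≠ 0 := by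
    intro h
    have hb := Metric.measure_ball_pos (volume : Measure (EuclideanSpace ℝ (Fin n))) x₀ hr₀
    rw [h] at hb
    simp at hb
  haveI : (ae (volume : Measure (EuclideanSpace ℝ (Fin n)))).NeBot :=
    ae_neBot.2 hvol0
  obtain ⟨x₁, hx₁⟩ := h2.exists
  by_cases hux : u x₁ = 0
  · filter_upwards [hx₁] with y hy
    rw [hy, hux]
  · exfalso
    obtain ⟨R, hR⟩ := hΩb.subset_closedBall 0
    set z : EuclideanSpace ℝ (Fin n) :=
      EuclideanSpace.single (⟨0, hn⟩ : Fin n) (|R| + 2) with hzdef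
    have hz : ‖z‖ = |R| + 2 := by
      rw [hzdef, EuclideanSpace.norm_single, Real.norm_eq_abs,
        abs_of_nonneg (by positivity)]
    have hsub : Metric.ball z 1 ⊆ {y | ¬ u y = u x₁} := by
      intro y hy
      have h5 : y ∉ Ω := by
        intro hyΩ
        have h6 : dist y 0 ≤ R := hR hyΩ
        have h7 : ‖y‖ ≤ R := by rwa [dist_zero_right] at h6
        have h8 : dist y z < 1 := Metric.mem_ball.1 hy
        have h9 : ‖z‖ ≤ ‖y‖ + dist y z := by
          calc ‖z‖ = ‖y - (y - z)‖ := by rw [sub_sub_cancel]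
            _ ≤ ‖y‖ + ‖y - z‖ := norm_sub_le _ _
            _ = ‖y‖ + dist y z := by rw [dist_eq_norm]
        rw [hz] at h9
        have := le_abs_self R
        linarith
      have hy0 : u y = 0 := hu.2.1 y h5
      simp only [mem_setOf_eq, hy0]
      exact fun hc => hux hc.symm
    have hnull : volume {y | ¬ (u y = u x₁)} = 0 := ae_iff.1 hx₁
    have hmon : volume (Metric.ball z 1) ≤ 0 := hnull ▸ measure_mono hsub
    exact absurd (lt_of_lt_of_le
      (Metric.measure_ball_pos (volume : Measure (EuclideanSpace ℝ (Fin n))) z one_pos)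
      hmon) (lt_irrefl 0)
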